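/- arXiv:math/0106102 — 2 statements merged into one kernel-verified Lean document; each statement's English description precedes it below -/
import Mathlib

section
/- Let λ be an infinite cardinal, G a countable graph, and H a graph of size λ. If the set of α < λ⁺ such that G_α embeds into H as an induced subgraph is unbounded in λ⁺, then G embeds into H as an induced subgraph. -/
open Cardinal Ordinal

/-- The poset `T α`: strictly decreasing finite lists of ordinals `< α`, ordered by
reverse strict-prefix; the empty list is the top element, and the lists starting with `β`
form the copy of `T β`. -/
def TT (α : Ordinal) : Type 1 :=
  {l : List Ordinal // l.Pairwise (· > ·) ∧ ∀ x ∈ l, x < α}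

instance instPOTT (α : Ordinal) : PartialOrder (TT α) where
  le u v := v.1 <+: u.1
  le_refl u := List.prefix_refl _
  le_trans _ _ _ h1 h2 := List.IsPrefix.trans h2 h1
  le_antisymm _ _ h1 h2 :=
    Subtype.ext (List.IsPrefix.eq_of_length h2 ((List.IsPrefix.length_le h2).antisymm (List.IsPrefix.length_le h1)))

/-- The top element of `T α`. -/
def topT (α : Ordinal) : TT α := ⟨[], by simp, by simp⟩

/-- The rank function of the reversed order `⟨T α, >⟩`. -/
def dT {α : Ordinal} (v : TT α) : ℕ := v.1.length

/-- The rank function of `⟨T α, <⟩`; the top element has rank `α`. -/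
def rT {α : Ordinal} (v : TT α) : Ordinal := v.1.getLastD α

/-- The graph `G_α` on `T α`: `u ~ v` iff `u, v` are comparable and `d u ~_G d v`. -/
def Gg (G : SimpleGraph ℕ) (α : Ordinal) : SimpleGraph (TT α) where
  Adj u v := u ≠ v ∧ (u ≤ v ∨ v ≤ u) ∧ G.Adj (dT u) (dT v)
  symm := ⟨fun _ _ h => ⟨Ne.symm h.1, h.2.1.symm, h.2.2.symm⟩⟩
  loopless := ⟨fun _ h => h.1 rfl⟩

/-- The one-way infinite path `P_ω` on `ℕ`. -/
def rayG : SimpleGraph ℕ := SimpleGraph.fromRel (fun m n => n = m + 1)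

/-- `A` is a (not necessarily induced) subgraph of `B`. -/
def SubCopy {X Y : Type*} (A : SimpleGraph X) (B : SimpleGraph Y) : Prop :=
  ∃ f : X ↪ Y, ∀ u v, A.Adj u v → B.Adj (f u) (f v)

/-- `R` is (isomorphic to) the countable random graph: the extension property. -/
def IsRado (R : SimpleGraph ℕ) : Prop :=
  ∀ A B : Finset ℕ, Disjoint A B →
    ∃ v, v ∉ A ∧ v ∉ B ∧ (∀ a ∈ A, R.Adj v a) ∧ (∀ b ∈ B, ¬R.Adj v b)

/-- An `(s, ξ)`-embedding: an induced embedding of some `G_α`, `ξ ≤ α < λ⁺`, into `H`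
whose image contains `s` as the top part of a chain with `d`-values `0, …, n` and whose
last vertex has rank `> ξ`. -/
def IsSXEmb {V : Type} (G : SimpleGraph ℕ) (lam : Cardinal) (H : SimpleGraph V)
    (s : List V) (ξ : Ordinal) : Prop :=
  ∃ α : Ordinal, ξ ≤ α ∧ α < (Order.succ lam).ord ∧
    ∃ (f : Gg G α ↪g H) (t : List (TT α)),
      s = t.map ⇑f ∧
      (∀ i : Fin t.length, dT (t.get i) = i.1) ∧
      (∀ u ∈ t, ∀ v ∈ t, u ≤ v ∨ v ≤ u) ∧
      (∀ v ∈ t.getLast?, ξ < rT v)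

/-- The set `U` of finite sequences admitting `(s, ξ)`-embeddings for all `ξ < λ⁺`. -/
def UU {V : Type} (G : SimpleGraph ℕ) (lam : Cardinal) (H : SimpleGraph V) :
    Set (List V) :=
  {s | ∀ ξ < (Order.succ lam).ord, IsSXEmb G lam H s ξ}


/- Statement 8: if the set of `α < λ⁺` such that `G_α` embeds into `H` is unbounded
in `λ⁺`, then `G` embeds into `H` as an induced subgraph. -/
section Helpers

open List in
lemma lastD_le {l : List Ordinal} (h : l.Pairwise (· > ·)) :
    ∀ a ∈ l, ∀ d : Ordinal, l.getLastD d ≤ a := by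
  induction l with
  | nil => simp
  | cons b rest ih =>
    intro a ha d
    rw [List.getLastD_cons]
    rcases List.mem_cons.1 ha with rfl | ha'
    · rcases List.mem_cons.1 (List.getLastD_mem_cons (l := rest) (a := a)) with he | hm
      · exact le_of_eq he
      · exact le_of_lt ((List.pairwise_cons.1 h).1 _ hm)
    · exact ih h.of_cons a ha' b

/-- The child of `u` obtained by appending `γ`. -/
def childT {α : Ordinal} (u : TT α) (γ : Ordinal) (hγ : γ < rT u) : TT α := by
  refine ⟨u.1 ++ [γ], ?_, ?_⟩
  · refine List.pairwise_append.2 ⟨u.2.1, List.pairwise_singleton _ _, ?_⟩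
    intro a ha b hb
    rw [List.mem_singleton] at hb
    subst hb
    exact lt_of_lt_of_le hγ (lastD_le u.2.1 a ha α)
  · intro x hx
    rcases List.mem_append.1 hx with hx | hx
    · exact u.2.2 x hx
    · rw [List.mem_singleton] at hx
      subst hx
      rcases List.mem_cons.1 (List.getLastD_mem_cons (l := u.1) (a := α)) with he | hm
      · exact hγ.trans_le (le_of_eq he)
      · exact hγ.trans (u.2.2 _ hm)

lemma rT_childT {α : Ordinal} (u : TT α) (γ : Ordinal) (hγ : γ < rT u) :
    rT (childT u γ hγ) = γ :=
  List.getLastD_concat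

lemma dT_childT {α : Ordinal} (u : TT α) (γ : Ordinal) (hγ : γ < rT u) :
    dT (childT u γ hγ) = dT u + 1 := by
  simp [childT, dT]

lemma childT_le {α : Ordinal} (u : TT α) (γ : Ordinal) (hγ : γ < rT u) :
    childT u γ hγ ≤ u :=
  List.prefix_append _ _

lemma le_iff_TT {α : Ordinal} (u v : TT α) : u ≤ v ↔ v.1 <+: u.1 := Iff.rfl

lemma le_of_comp_dT {α : Ordinal} {u v : TT α} (h : u ≤ v ∨ v ≤ u) (hd : dT u ≤ dT v) :
    v ≤ u := by
  rcases h with h | h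
  · have h1 : u.1.length ≤ v.1.length := hd
    have h2 : v.1.length ≤ u.1.length := List.IsPrefix.length_le h
    have h3 : v.1 = u.1 := List.IsPrefix.eq_of_length h (le_antisymm h2 h1)
    exact le_of_eq (Subtype.ext h3)
  · exact h

lemma isSXEmb_mono {V : Type} {G : SimpleGraph ℕ} {lam : Cardinal} {H : SimpleGraph V}
    {s : List V} {ξ ξ' : Ordinal} (h : IsSXEmb G lam H s ξ) (hle : ξ' ≤ ξ) :
    IsSXEmb G lam H s ξ' := by
  obtain ⟨α, h1, h2, f, t, h3, h4, h5, h6⟩ := h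
  exact ⟨α, hle.trans h1, h2, f, t, h3, h4, h5, fun v hv => hle.trans_lt (h6 v hv)⟩

end Helpers

section ExtendLemma

variable {V : Type} {G : SimpleGraph ℕ} {lam : Cardinal} {H : SimpleGraph V}

lemma step_lemma (hlam : Cardinal.aleph0 ≤ lam) {s : List V} (hs : s ∈ UU G lam H)
    {ξ : Ordinal} (hξ : ξ < (Order.succ lam).ord) :
    ∃ v : V, IsSXEmb G lam H (s ++ [v]) ξ := by
  have hlim : Order.IsSuccLimit ((Order.succ lam).ord) :=
    Cardinal.isSuccLimit_ord (hlam.trans (le_of_lt (Order.lt_succ lam)))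
  have hξ2 : ξ + 1 + 1 < (Order.succ lam).ord := by
    simpa only [Ordinal.add_one_eq_succ] using hlim.succ_lt (hlim.succ_lt hξ)
  obtain ⟨α, h1, h2, f, t, h3, h4, h5, h6⟩ := hs (ξ + 1 + 1) hξ2
  have hξα : ξ ≤ α := le_trans (le_of_lt (lt_of_lt_of_le (lt_of_lt_of_le
    (Order.lt_succ ξ) (le_of_lt (Order.lt_succ (ξ+1)))) h1)) le_rfl
  rcases eq_or_ne t [] with rfl | htne
  · -- empty case: use the top element
    have hs0 : s = [] := by simpa using h3
    refine ⟨f (topT α), α, hξα, h2, f, [topT α], by simp [hs0], ?_, ?_, ?_⟩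
    · intro i
      obtain ⟨iv, hiv⟩ := i
      have h0 : iv = 0 := by
        simp only [List.length_singleton] at hiv
        omega
      subst h0
      rfl
    · intro u hu v hv
      simp only [List.mem_singleton] at hu hv
      subst hu; subst hv; exact Or.inl le_rfl
    · intro v hv
      simp only [List.getLast?_singleton, Option.mem_some_iff] at hv
      subst hv
      calc ξ < ξ + 1 + 1 := lt_of_lt_of_le (Order.lt_succ ξ) (le_of_lt (Order.lt_succ (ξ+1)))
        _ ≤ α := h1
      -- rT (topT α) = α
  · -- nonempty case: extend the last element of the chain
    have hu : t.getLast htne ∈ t := List.getLast_mem htne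
    have hrank : ξ + 1 + 1 < rT (t.getLast htne) := by
      apply h6
      rw [List.getLast?_eq_getLast_of_ne_nil htne]
      rfl
    have hγ : ξ + 1 < rT (t.getLast htne) := (Order.lt_succ (ξ+1)).trans hrank
    set u := t.getLast htne with hu_def
    set w := childT u (ξ + 1) hγ with hw_def
    have hdu : dT u = t.length - 1 := by
      have := h4 ⟨t.length - 1, Nat.sub_lt (List.length_pos_iff.2 htne) one_pos⟩
      rwa [show t.get ⟨t.length - 1, _⟩ = t.getLast htne from
        (List.getLast_eq_getElem htne).symm] at this
    have hdw : dT w = t.length := by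
      rw [hw_def, dT_childT, hdu, Nat.sub_add_cancel (Nat.one_le_iff_ne_zero.2
        (fun h0 => htne (List.length_eq_zero_iff.1 h0)))]
    have hprefix : ∀ u' ∈ t, u'.1 <+: u.1 := by
      intro u' hu'
      obtain ⟨i, hi, rfl⟩ := List.mem_iff_get.1 hu'
      have hd' : dT (t.get i) ≤ dT u := by
        rw [h4 i, hdu]; omega
      exact le_of_comp_dT (h5 _ (List.get_mem t _) u hu) hd'
    refine ⟨f w, α, hξα, h2, f, t ++ [w], by simp [h3], ?_, ?_, ?_⟩
    · intro i
      rcases Nat.lt_or_ge i.1 t.length with hi | hi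
      · have : (t ++ [w]).get i = t.get ⟨i.1, hi⟩ := by
          simp [List.get_eq_getElem, List.getElem_append_left hi]
        rw [this, h4]
      · have hieq : i.1 = t.length := by
          have := i.2; simp at this; omega
        have : (t ++ [w]).get i = w := by
          simp [List.get_eq_getElem, List.getElem_concat_length hieq]
        rw [this, hdw, hieq]
    · intro a ha b hb
      have key : ∀ a ∈ t ++ [w], ∀ b ∈ t, a ≤ b ∨ b ≤ a := by
        intro a ha b hb
        rcases List.mem_append.1 ha with ha | ha
        · exact h5 a ha b hb
        · rw [List.mem_singleton] at ha; subst ha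
          left
          exact (hprefix b hb).trans (childT_le u _ hγ)
      rcases List.mem_append.1 hb with hb | hb
      · exact key a ha b hb
      · rw [List.mem_singleton] at hb; subst hb
        rcases List.mem_append.1 ha with ha | ha
        · exact (key w (List.mem_append.2 (Or.inr (List.mem_singleton_self _))) a ha).symm
        · rw [List.mem_singleton] at ha; subst ha
          exact Or.inl le_rfl
    · intro v hv
      rw [List.getLast?_concat, Option.mem_some_iff] at hv
      subst hv
      rw [hw_def, rT_childT]
      exact Order.lt_succ ξ

lemma extend_lemma (hlam : Cardinal.aleph0 ≤ lam) (hV : Cardinal.mk V = lam)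
    {s : List V} (hs : s ∈ UU G lam H) :
    ∃ v : V, s ++ [v] ∈ UU G lam H := by
  have hne : Nonempty V := by
    rw [← Cardinal.mk_ne_zero_iff, hV]
    exact (Cardinal.aleph0_pos.trans_le hlam).ne'
  classical
  set O := (Order.succ lam).ord with hO
  let v : Ordinal → V := fun ξ =>
    if h : ξ < O then (step_lemma hlam hs h).choose else Classical.arbitrary V
  have hv : ∀ ξ (h : ξ < O), IsSXEmb G lam H (s ++ [v ξ]) ξ := by
    intro ξ h
    simp only [v, dif_pos h]
    exact (step_lemma hlam hs h).choose_spec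
  by_contra hcon
  push_neg at hcon
  have hbound : ∀ x : V, ∃ b, b < O ∧ ¬ IsSXEmb G lam H (s ++ [x]) b := by
    intro x
    have := hcon x
    simp only [UU, Set.mem_setOf_eq, not_forall] at this
    obtain ⟨b, hb, hnb⟩ := this
    exact ⟨b, hb, hnb⟩
  choose b hbO hnb using hbound
  have hsup : (⨆ x : V, b x) < O := by
    refine Ordinal.iSup_lt_ord ?_ hbO
    rw [hV, hO, (Cardinal.isRegular_succ hlam).cof_eq]
    exact Order.lt_succ lam
  set β := ⨆ x : V, b x with hβ
  have hβO : β < O := hsup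
  have h1 : IsSXEmb G lam H (s ++ [v β]) β := hv β hβO
  have h2 : b (v β) ≤ β := Ordinal.le_iSup b (v β)
  exact hnb (v β) (isSXEmb_mono h1 h2)

end ExtendLemma

/-- stmt8 -/
theorem stmt8 {V : Type} (lam : Cardinal) (hlam : Cardinal.aleph0 ≤ lam)
    (G : SimpleGraph ℕ) (H : SimpleGraph V) (hV : Cardinal.mk V = lam)
    (hemb : ∀ ξ : Ordinal, ξ < (Order.succ lam).ord →
      ∃ α : Ordinal, ξ ≤ α ∧ α < (Order.succ lam).ord ∧ Nonempty (Gg G α ↪g H)) :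
    Nonempty (G ↪g H) := by
  classical
  have hne : Nonempty V := by
    rw [← Cardinal.mk_ne_zero_iff, hV]
    exact (Cardinal.aleph0_pos.trans_le hlam).ne'
  have hbase : ([] : List V) ∈ UU G lam H := by
    intro ξ hξ
    obtain ⟨α, h1, h2, ⟨f⟩⟩ := hemb ξ hξ
    exact ⟨α, h1, h2, f, [], by simp, fun i => i.elim0, by simp, by simp⟩
  have hstep : ∀ p : {s : List V // s ∈ UU G lam H},
      ∃ v : V, p.1 ++ [v] ∈ UU G lam H := fun p => extend_lemma hlam hV p.2
  choose ext hext using hstep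
  let F : {s : List V // s ∈ UU G lam H} → {s : List V // s ∈ UU G lam H} :=
    fun p => ⟨p.1 ++ [ext p], hext p⟩
  let S : ℕ → {s : List V // s ∈ UU G lam H} := fun n => F^[n] ⟨[], hbase⟩
  have hSsucc : ∀ n, (S (n+1)).1 = (S n).1 ++ [ext (S n)] := by
    intro n
    show (F^[n+1] _).1 = _
    rw [Function.iterate_succ_apply']
  have hSlen : ∀ n, (S n).1.length = n := by
    intro n
    induction n with
    | zero => rfl
    | succ n ih => rw [hSsucc n]; simp [ih]
  have hSpre : ∀ m n, m ≤ n → (S m).1 <+: (S n).1 := by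
    intro m n h
    induction n with
    | zero => rw [Nat.le_zero.1 h]
    | succ n ih =>
      rcases Nat.lt_or_ge m (n+1) with h' | h'
      · rw [hSsucc n]
        exact (ih (Nat.lt_succ_iff.1 h')).trans (List.prefix_append _ _)
      · rw [le_antisymm h h']
  let g : ℕ → V := fun n => (S (n+1)).1.getLast (by
    intro h0
    have := hSlen (n+1)
    rw [h0] at this
    simp at this)
  have hg : ∀ n i (hi : i < (S n).1.length), (S n).1.get ⟨i, hi⟩ = g i := by
    intro n i hi
    have hi' : i < n := by rwa [hSlen n] at hi
    have hpre : (S (i+1)).1 <+: (S n).1 := hSpre _ _ hi'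
    have hlast : g i = (S (i+1)).1.get ⟨i, by rw [hSlen]; omega⟩ := by
      show (S (i+1)).1.getLast _ = _
      rw [List.getLast_eq_getElem]
      simp [hSlen]
    rw [hlast]
    simp only [List.get_eq_getElem]
    exact (List.IsPrefix.getElem hpre _).symm
  have hcore : ∀ i j : ℕ, i ≠ j → (H.Adj (g i) (g j) ↔ G.Adj i j) ∧ g i ≠ g j := by
    intro i j hij
    set n := max i j + 1 with hn
    have hξ0 : (0 : Ordinal) < (Order.succ lam).ord :=
      by simpa using (Cardinal.isSuccLimit_ord (hlam.trans (le_of_lt (Order.lt_succ lam)))).bot_lt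
    obtain ⟨α, _, _, f, t, h3, h4, h5, _⟩ := (S n).2 0 hξ0
    have htlen : t.length = n := by
      have := hSlen n
      rw [h3] at this
      simpa using this
    have hi : i < t.length := by omega
    have hj : j < t.length := by omega
    have hgi : g i = f (t.get ⟨i, hi⟩) := by
      rw [← hg n i (by rw [hSlen]; omega)]
      simp only [List.get_eq_getElem]
      rw [List.getElem_of_eq h3]
      simp
    have hgj : g j = f (t.get ⟨j, hj⟩) := by
      rw [← hg n j (by rw [hSlen]; omega)]
      simp only [List.get_eq_getElem]
      rw [List.getElem_of_eq h3]
      simp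
    have htne : t.get ⟨i, hi⟩ ≠ t.get ⟨j, hj⟩ := by
      intro he
      have : dT (t.get ⟨i, hi⟩) = dT (t.get ⟨j, hj⟩) := by rw [he]
      rw [h4 ⟨i, hi⟩, h4 ⟨j, hj⟩] at this
      exact hij this
    constructor
    · rw [hgi, hgj, f.map_adj_iff]
      change (_ ∧ _ ∧ _) ↔ _
      constructor
      · rintro ⟨-, -, hadj⟩
        rwa [h4 ⟨i, hi⟩, h4 ⟨j, hj⟩] at hadj
      · intro hadj
        refine ⟨htne, h5 _ (List.get_mem t _) _ (List.get_mem t _), ?_⟩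
        rwa [h4 ⟨i, hi⟩, h4 ⟨j, hj⟩]
    · rw [hgi, hgj]
      exact fun he => htne (f.injective he)
  refine ⟨⟨⟨g, ?_⟩, ?_⟩⟩
  · intro i j he
    by_contra hij
    exact (hcore i j hij).2 he
  · intro i j
    rcases eq_or_ne i j with rfl | hij
    · simp
    · exact (hcore i j hij).1
end

section
/- Let λ be an infinite cardinal and let 𝔉 be any class of graphs of size λ with Forb_λ(P_ω) ⊆ 𝔉 ⊆ Forb^ind_λ(R). Then 𝔉 has no universal element with respect to induced-subgraph embeddings: for every H ∈ 𝔉 there exists G' ∈ Forb_λ(P_ω) ⊆ 𝔉 that does not embed into H as an induced subgraph. -/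
open Cardinal Ordinal

open Cardinal Ordinal

lemma sumPow_lt (A : Finset ℕ) : ∀ n, (∀ a ∈ A, a < n) → ∑ a ∈ A, 2 ^ a < 2 ^ n := by
  induction A using Finset.induction_on_max with
  | empty => intro n _; positivity
  | insert a A ha IH =>
    intro n hn
    rw [Finset.sum_insert (fun h => lt_irrefl a (ha a h))]
    have h1 : ∑ b ∈ A, 2 ^ b < 2 ^ a := IH a ha
    have h2 : a < n := hn a (Finset.mem_insert_self a A)
    calc 2 ^ a + ∑ b ∈ A, 2 ^ b < 2 ^ a + 2 ^ a := by omega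
    _ = 2 ^ (a + 1) := by ring
    _ ≤ 2 ^ n := Nat.pow_le_pow_right (by norm_num) h2

lemma testBit_sumPow (A : Finset ℕ) (k : ℕ) :
    (∑ a ∈ A, 2 ^ a).testBit k = true ↔ k ∈ A := by
  induction A using Finset.induction_on_max with
  | empty => simp
  | insert a A ha IH =>
    rw [Finset.sum_insert (fun h => lt_irrefl a (ha a h))]
    rcases lt_trichotomy k a with h | h | h
    · rw [Nat.testBit_two_pow_add_gt h, IH, Finset.mem_insert]
      constructor
      · exact Or.inr
      · rintro (rfl | hk); · omega
        · exact hk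
    · subst h
      rw [Nat.testBit_two_pow_add_eq]
      have : (∑ b ∈ A, 2 ^ b).testBit k = false :=
        Nat.testBit_lt_two_pow (sumPow_lt A k ha)
      simp [this]
    · have hlt : 2 ^ a + ∑ b ∈ A, 2 ^ b < 2 ^ k := by
        have h1 : ∑ b ∈ A, 2 ^ b < 2 ^ a := sumPow_lt A a ha
        have h2 : 2 ^ (a + 1) ≤ 2 ^ k := Nat.pow_le_pow_right (by norm_num) h
        have : (2:ℕ) ^ (a+1) = 2 ^ a + 2 ^ a := by ring
        omega
      rw [Nat.testBit_lt_two_pow hlt]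
      simp only [Bool.false_eq_true, false_iff, Finset.mem_insert]
      rintro (rfl | hk)
      · omega
      · exact absurd (ha k hk) (by omega)

def radoG : SimpleGraph ℕ := SimpleGraph.fromRel (fun m n => Nat.testBit n m)

lemma isRado_radoG : IsRado radoG := by
  intro A B hAB
  set N := (A ∪ B).sup id + 1 with hN
  have hub : ∀ x ∈ A ∪ B, x < N := by
    intro x hx
    have := Finset.le_sup (f := id) hx
    simp only [id] at this
    omega
  set v := ∑ a ∈ insert N A, 2 ^ a with hv
  have hbit : ∀ k, v.testBit k = true ↔ k ∈ insert N A := fun k => testBit_sumPow _ k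
  have hvge : 2 ^ N ≤ v := Finset.single_le_sum (f := fun a => 2 ^ a) (by intros; positivity)
    (Finset.mem_insert_self N A)
  have hvN : N < v := lt_of_lt_of_le (Nat.lt_two_pow_self (n := N)) hvge
  have hvgt : ∀ x ∈ A ∪ B, x < v := fun x hx => lt_trans (hub x hx) hvN
  refine ⟨v, ?_, ?_, ?_, ?_⟩
  · intro h; exact absurd (hvgt v (Finset.mem_union_left _ h)) (lt_irrefl v)
  · intro h; exact absurd (hvgt v (Finset.mem_union_right _ h)) (lt_irrefl v)
  · intro a haA
    have hne : v ≠ a := (hvgt a (Finset.mem_union_left _ haA)).ne'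
    refine ⟨hne, Or.inr ?_⟩
    show v.testBit a = true
    exact (hbit a).mpr (Finset.mem_insert_of_mem haA)
  · intro b hbB
    rintro ⟨hne, h | h⟩
    · have h' : b.testBit v = true := h
      have : b < 2 ^ v := lt_trans (hvgt b (Finset.mem_union_right _ hbB)) (Nat.lt_two_pow_self (n := v))
      rw [Nat.testBit_lt_two_pow this] at h'
      exact Bool.false_ne_true h'
    · have h' : v.testBit b = true := h
      rw [hbit b] at h'
      rcases Finset.mem_insert.mp h' with heq | hbA
      · have := hub b (Finset.mem_union_right _ hbB)
        omega
      · exact (Finset.disjoint_left.mp hAB hbA) hbB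


lemma prefix_head_eq {l1 l2 : List Ordinal} {β : Ordinal} {l : List Ordinal}
    (h : l1 <+: l2 ∨ l2 <+: l1) (h1 : l1 = β :: l) (h2 : l2 ≠ []) :
    ∃ m, l2 = β :: m := by
  cases hl2 : l2 with
  | nil => exact absurd hl2 h2
  | cons c m =>
    subst h1 hl2
    rcases h with h | h
    · obtain ⟨heq, -⟩ := List.cons_prefix_cons.mp h
      exact ⟨m, by rw [heq]⟩
    · obtain ⟨heq, -⟩ := List.cons_prefix_cons.mp h
      exact ⟨m, by rw [heq]⟩

lemma noRay : ∀ α : Ordinal, ∀ v : ℕ → TT α, Function.Injective v →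
    (∀ n, (v (n+1)).1 <+: (v n).1 ∨ (v n).1 <+: (v (n+1)).1) → False := by
  intro α
  induction α using Ordinal.induction with
  | h α IH =>
    intro v hinj hcomp
    obtain ⟨N, hNe⟩ : ∃ N, ∀ n, N ≤ n → (v n).1 ≠ [] := by
      by_cases h : ∃ n0, (v n0).1 = []
      · obtain ⟨n0, h0⟩ := h
        refine ⟨n0 + 1, fun n hn hemp => ?_⟩
        have : v n = v n0 := Subtype.ext (hemp.trans h0.symm)
        have := hinj this
        omega
      · push_neg at h
        exact ⟨0, fun n _ => h n⟩
    obtain ⟨β, l0, hl0⟩ : ∃ β l0, (v N).1 = β :: l0 := by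
      cases h : (v N).1 with
      | nil => exact absurd h (hNe N le_rfl)
      | cons a l => exact ⟨a, l, rfl⟩
    have hβ : β < α := (v N).2.2 β (by rw [hl0]; exact List.mem_cons_self)
    have hcons : ∀ n : ℕ, ∃ l, (v (N + n)).1 = β :: l := by
      intro n
      induction n with
      | zero => exact ⟨l0, hl0⟩
      | succ n ih =>
        obtain ⟨l, hl⟩ := ih
        exact prefix_head_eq (Or.symm (hcomp (N + n))) hl (hNe (N + n + 1) (by omega))
    have hsort : ∀ n : ℕ, ((hcons n).choose).Pairwise (· > ·) ∧
        ∀ x ∈ (hcons n).choose, x < β := by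
      intro n
      have h2 := (v (N + n)).2.1
      rw [(hcons n).choose_spec, List.pairwise_cons] at h2
      exact ⟨h2.2, fun x hx => h2.1 x hx⟩
    set w : ℕ → TT β := fun n => ⟨(hcons n).choose, (hsort n).1, (hsort n).2⟩ with hw
    refine IH β hβ w ?_ ?_
    · intro a b hab
      have : (v (N + a)).1 = (v (N + b)).1 := by
        rw [(hcons a).choose_spec, (hcons b).choose_spec]
        exact congrArg (β :: ·) (congrArg Subtype.val hab)
      have := hinj (Subtype.ext this)
      omega
    · intro n
      have h := hcomp (N + n)
      rw [show N + n + 1 = N + (n + 1) from rfl] at h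
      rcases h with h | h
      · left
        rw [(hcons (n+1)).choose_spec, (hcons n).choose_spec] at h
        exact (List.cons_prefix_cons.mp h).2
      · right
        rw [(hcons (n+1)).choose_spec, (hcons n).choose_spec] at h
        exact (List.cons_prefix_cons.mp h).2


lemma mk_TT (α : Ordinal) (hα : Cardinal.aleph0 ≤ α.card) :
    Cardinal.mk (TT α) = Cardinal.lift.{1} α.card := by
  have hpos : 0 < α := by
    rw [pos_iff_ne_zero]
    rintro rfl
    rw [Ordinal.card_zero] at hα
    exact Cardinal.aleph0_ne_zero (le_antisymm hα zero_le)
  have hne : Nonempty (Set.Iio α) := ⟨⟨0, hpos⟩⟩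
  apply le_antisymm
  · have h1 : Cardinal.mk (TT α) ≤ Cardinal.mk (List (Set.Iio α)) := by
      refine Cardinal.mk_le_of_injective
        (f := fun l => l.1.attachWith (· ∈ Set.Iio α) (fun x hx => l.2.2 x hx)) ?_
      intro a b hab
      apply Subtype.ext
      have := congrArg (List.map Subtype.val) hab
      exact (List.attachWith_map_subtype_val ..).symm.trans (this.trans (List.attachWith_map_subtype_val ..))
    refine h1.trans ?_
    rw [Cardinal.mk_list_eq_max_mk_aleph0, Ordinal.mk_Iio_ordinal]
    apply max_le le_rfl
    rw [← Cardinal.lift_aleph0.{1,0}]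
    exact Cardinal.lift_le.mpr hα
  · rw [← Ordinal.mk_Iio_ordinal]
    refine Cardinal.mk_le_of_injective
      (f := fun x => (⟨[x.1], List.pairwise_singleton _ _, by intro y hy; rw [List.mem_singleton] at hy; subst hy; exact x.2⟩ : TT α)) ?_
    intro a b hab
    apply Subtype.ext
    simpa using congrArg Subtype.val hab

lemma noSubCopy_comap {V : Type} (G : SimpleGraph ℕ) (α : Ordinal) (e : V ≃ TT α) :
    ¬ SubCopy rayG ((Gg G α).comap ⇑e) := by
  rintro ⟨f, hf⟩
  refine noRay α (fun n => e (f n)) (fun a b hab => f.injective (e.injective hab)) ?_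
  intro n
  have hray : rayG.Adj n (n + 1) := by
    rw [rayG, SimpleGraph.fromRel_adj]
    exact ⟨by omega, Or.inl rfl⟩
  have h := hf n (n + 1) hray
  exact (show e (f n) ≠ e (f (n+1)) ∧ (e (f n) ≤ e (f (n+1)) ∨ e (f (n+1)) ≤ e (f n)) ∧ G.Adj (dT (e (f n))) (dT (e (f (n+1)))) from h).2.1

lemma embGg {V : Type} {lam : Cardinal} (hlam : Cardinal.aleph0 ≤ lam)
    (H : SimpleGraph V)
    (hU : ∀ G' : SimpleGraph V, ¬ SubCopy rayG G' → Nonempty (G' ↪g H))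
    (hV : Cardinal.mk V = lam) (G : SimpleGraph ℕ) (α : Ordinal) (hcard : α.card = lam) :
    Nonempty (Gg G α ↪g H) := by
  have hαc : Cardinal.aleph0 ≤ α.card := hcard ▸ hlam
  have h1 : Cardinal.lift.{1} (Cardinal.mk V) = Cardinal.lift.{0} (Cardinal.mk (TT α)) := by
    rw [Cardinal.lift_uzero, mk_TT α hαc, hcard, hV]
  obtain ⟨e⟩ : Nonempty (V ≃ TT α) := Cardinal.lift_mk_eq'.mp h1
  obtain ⟨g⟩ := hU ((Gg G α).comap ⇑e) (noSubCopy_comap G α e)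
  exact ⟨g.comp (SimpleGraph.Iso.comap e (Gg G α)).symm.toEmbedding⟩


lemma sorted_getLastD_le : ∀ (l : List Ordinal), l.Pairwise (· > ·) → ∀ d : Ordinal,
    (∀ x ∈ l, x < d) → (∀ x ∈ l, l.getLastD d ≤ x) ∧ l.getLastD d ≤ d := by
  intro l
  induction l with
  | nil => intro _ d _; exact ⟨by simp, le_rfl⟩
  | cons a t IH =>
    intro hs d hd
    rw [List.pairwise_cons] at hs
    obtain ⟨h1, h2⟩ := IH hs.2 a (fun x hx => hs.1 x hx)
    rw [List.getLastD_cons]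
    refine ⟨?_, h2.trans (le_of_lt (hd a List.mem_cons_self))⟩
    intro x hx
    rcases List.mem_cons.mp hx with rfl | hx
    · exact h2
    · exact h1 x hx

lemma sxemb_mono {V : Type} {G : SimpleGraph ℕ} {lam : Cardinal} {H : SimpleGraph V}
    {s : List V} {ξ ξ' : Ordinal} (hle : ξ' ≤ ξ) (h : IsSXEmb G lam H s ξ) :
    IsSXEmb G lam H s ξ' := by
  obtain ⟨α, h1, h2, f, t, ht1, ht2, ht3, ht4⟩ := h
  exact ⟨α, hle.trans h1, h2, f, t, ht1, ht2, ht3,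
    fun v hv => lt_of_le_of_lt hle (ht4 v hv)⟩

section Main

variable {V : Type} {lam : Cardinal} (hlam : Cardinal.aleph0 ≤ lam)
  (hV : Cardinal.mk V = lam) {H : SimpleGraph V}
  (hU : ∀ G' : SimpleGraph V, ¬ SubCopy rayG G' → Nonempty (G' ↪g H))

include hlam hV hU

lemma UU_nil : [] ∈ UU radoG lam H := by
  intro ξ hξ
  set α := max ξ lam.ord with hα
  have hαS : α < (Order.succ lam).ord :=
    max_lt hξ (Cardinal.ord_lt_ord.mpr (Order.lt_succ lam))
  have hcard : α.card = lam := by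
    apply le_antisymm
    · exact Order.lt_succ_iff.mp (Cardinal.lt_ord.mp hαS)
    · calc lam = lam.ord.card := (Cardinal.card_ord lam).symm
      _ ≤ α.card := Ordinal.card_le_card (le_max_right _ _)
  obtain ⟨f⟩ := embGg hlam H hU hV radoG α hcard
  refine ⟨α, le_max_left _ _, hαS, f, [], by simp, ?_, by simp, by simp⟩
  intro i
  exact absurd i.isLt (by simp)

lemma UU_extend {s : List V} (hs : s ∈ UU radoG lam H) {ξ : Ordinal}
    (hξ : ξ < (Order.succ lam).ord) : ∃ w, IsSXEmb radoG lam H (s ++ [w]) ξ := by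
  have hSlim : Order.IsSuccLimit ((Order.succ lam).ord) :=
    Cardinal.isSuccLimit_ord (hlam.trans (Order.le_succ lam))
  have e1 : ξ + 1 = Order.succ ξ := Ordinal.add_one_eq_succ ξ
  have e2 : ξ + 2 = Order.succ (Order.succ ξ) := by
    rw [← Ordinal.add_one_eq_succ, ← e1, add_assoc]
    norm_num
  have h2 : ξ + 2 < (Order.succ lam).ord := by
    rw [e2]; exact hSlim.succ_lt (hSlim.succ_lt hξ)
  have hξ1 : ξ < ξ + 1 := by rw [e1]; exact Order.lt_succ ξ
  have hξ2 : ξ + 1 < ξ + 2 := by rw [e1, e2]; exact Order.lt_succ _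
  obtain ⟨α, hξα, hαS, f, t, htmap, hdT, hchain, hlast⟩ := hs (ξ + 2) h2
  have hξα' : ξ ≤ α := le_of_lt (lt_of_lt_of_le (hξ1.trans hξ2) hξα)
  rcases eq_or_ne t [] with rfl | htne
  · -- s is empty; extend with the top element
    have hsnil : s = [] := by simpa using htmap
    refine ⟨f (topT α), α, hξα', hαS, f, [topT α], by rw [hsnil]; simp, ?_, ?_, ?_⟩
    · intro i
      have h0 : i.1 = 0 := by
        have h := i.isLt
        simp only [List.length_singleton] at h
        omega
      rw [List.get_eq_getElem, List.getElem_singleton]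
      show ([] : List Ordinal).length = i.1
      simp [h0]
    · intro u hu v hv
      rw [List.mem_singleton] at hu hv
      subst hu; subst hv
      exact Or.inl le_rfl
    · intro v hv
      rw [List.getLast?_singleton, Option.mem_some_iff] at hv
      subst hv
      show ξ < rT (topT α)
      exact lt_of_lt_of_le (hξ1.trans hξ2) hξα
  · -- t is nonempty; extend below its last element
    set u := t.getLast htne with hu
    have humem : u ∈ t := List.getLast_mem htne
    have hrTu : ξ + 2 < rT u := by
      apply hlast
      rw [List.getLast?_eq_getLast htne]
      rfl
    have hulen : u.1.length = t.length - 1 := by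
      have := hdT ⟨t.length - 1, by have := List.length_pos_iff.mpr htne; omega⟩
      rw [List.get_eq_getElem] at this
      rw [hu, List.getLast_eq_getElem]
      exact this
    have hmin : ∀ x ∈ u.1, rT u ≤ x := (sorted_getLastD_le u.1 u.2.1 α u.2.2).1
    have hrTuα : rT u ≤ α := (sorted_getLastD_le u.1 u.2.1 α u.2.2).2
    have hβα : ξ + 1 < α := lt_of_lt_of_le hξ2 hξα
    have hβu : ξ + 1 < rT u := hξ2.trans hrTu
    set w : TT α := ⟨u.1 ++ [ξ + 1], by
      apply List.pairwise_append.mpr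
      refine ⟨u.2.1, by simp, ?_⟩
      intro x hx y hy
      rw [List.mem_singleton] at hy
      subst hy
      exact lt_of_lt_of_le hβu (hmin x hx), by
      intro x hx
      rw [List.mem_append] at hx
      rcases hx with hx | hx
      · exact u.2.2 x hx
      · rw [List.mem_singleton] at hx; subst hx; exact hβα⟩ with hw
    -- every element of t has u's list as an extension
    have hpref : ∀ x ∈ t, x.1 <+: u.1 := by
      intro x hx
      obtain ⟨i, hi⟩ := List.mem_iff_get.mp hx
      have hxlen : x.1.length ≤ u.1.length := by
        have h1 := hdT i
        rw [hi] at h1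
        have h2 : x.1.length = i.1 := h1
        rw [h2, hulen]
        have := i.isLt
        omega
      rcases hchain x hx u humem with h | h
      · -- u.1 <+: x.1
        have heq : u.1 = x.1 := List.IsPrefix.eq_of_length h
          (le_antisymm (h.length_le) hxlen)
        rw [← heq]
      · exact h
    have hwle : ∀ x ∈ t, w ≤ x := by
      intro x hx
      show x.1 <+: w.1
      exact (hpref x hx).trans (List.prefix_append _ _)
    refine ⟨f w, α, hξα', hαS, f, t ++ [w], by rw [List.map_append, ← htmap]; rfl, ?_, ?_, ?_⟩
    · intro i
      have hilt : i.1 < t.length + 1 := by have := i.isLt; simpa using this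
      rw [List.get_eq_getElem]
      rcases Nat.lt_or_ge i.1 t.length with h | h
      · rw [List.getElem_append_left h]
        have := hdT ⟨i.1, h⟩
        rw [List.get_eq_getElem] at this
        exact this
      · have hieq : i.1 = t.length := by omega
        rw [List.getElem_concat_length hieq]
        show (u.1 ++ [ξ+1]).length = i.1
        rw [List.length_append, hulen, hieq]
        have := List.length_pos_iff.mpr htne
        simp
        omega
    · intro a ha b hb
      rw [List.mem_append, List.mem_singleton] at ha hb
      rcases ha with ha | rfl <;> rcases hb with hb | rfl
      · exact hchain a ha b hb
      · exact Or.inr (hwle a ha)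
      · exact Or.inl (hwle b hb)
      · exact Or.inl le_rfl
    · intro v hv
      rw [List.getLast?_concat, Option.mem_some_iff] at hv
      subst hv
      show ξ < rT w
      have : rT w = ξ + 1 := List.getLastD_concat
      rw [this]
      exact hξ1

end Main


section Main2

variable {V : Type} {lam : Cardinal} (hlam : Cardinal.aleph0 ≤ lam)
  (hV : Cardinal.mk V = lam) {H : SimpleGraph V}
  (hU : ∀ G' : SimpleGraph V, ¬ SubCopy rayG G' → Nonempty (G' ↪g H))

include hlam hV hU

set_option linter.unusedSectionVars false

lemma UU_extend_mem {s : List V} (hs : s ∈ UU radoG lam H) :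
    ∃ w, s ++ [w] ∈ UU radoG lam H := by
  classical
  have hVne : Nonempty V := Cardinal.mk_ne_zero_iff.mp
    (by rw [hV]; exact (Cardinal.aleph0_pos.trans_le hlam).ne')
  by_contra hno
  push_neg at hno
  have hno' : ∀ w : V, ∃ ξ, ξ < (Order.succ lam).ord ∧
      ¬ IsSXEmb radoG lam H (s ++ [w]) ξ := by
    intro w
    by_contra h
    push_neg at h
    exact hno w (fun ξ hξ => h ξ hξ)
  choose η hη1 hη2 using hno'
  have hreg : ((Order.succ lam).ord).cof = Order.succ lam :=
    (Cardinal.isRegular_succ hlam).cof_eq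
  have hsup : (⨆ w, η w) < (Order.succ lam).ord := by
    apply Ordinal.iSup_lt_ord _ hη1
    rw [hreg, hV]
    exact Order.lt_succ lam
  obtain ⟨w, hw⟩ := UU_extend hlam hV hU hs hsup
  exact hη2 w (sxemb_mono (Ordinal.le_iSup η w) hw)

lemma UU_adj {s : List V} (hs : s ∈ UU radoG lam H) (i j : ℕ)
    (hi : i < s.length) (hj : j < s.length) (hij : i ≠ j) :
    (H.Adj (s[i]'hi) (s[j]'hj) ↔ radoG.Adj i j) ∧ s[i]'hi ≠ s[j]'hj := by
  have hS0 : (0 : Ordinal) < (Order.succ lam).ord :=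
    (Cardinal.isSuccLimit_ord (hlam.trans (Order.le_succ lam))).pos
  obtain ⟨α, -, -, f, t, htmap, hdT, hchain, -⟩ := hs 0 hS0
  subst htmap
  have hi' : i < t.length := by rwa [List.length_map] at hi
  have hj' : j < t.length := by rwa [List.length_map] at hj
  have hti : dT (t[i]'hi') = i := by
    have := hdT ⟨i, hi'⟩
    rwa [List.get_eq_getElem] at this
  have htj : dT (t[j]'hj') = j := by
    have := hdT ⟨j, hj'⟩
    rwa [List.get_eq_getElem] at this
  have htne : t[i]'hi' ≠ t[j]'hj' := fun h => hij (by rw [← hti, ← htj, h])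
  have hcmp := hchain _ (List.getElem_mem hi') _ (List.getElem_mem hj')
  constructor
  · rw [List.getElem_map, List.getElem_map, SimpleGraph.Embedding.map_adj_iff]
    show (_ ∧ _ ∧ _) ↔ _
    constructor
    · rintro ⟨-, -, h⟩
      rwa [hti, htj] at h
    · intro h
      exact ⟨htne, hcmp, by rwa [hti, htj]⟩
  · rw [List.getElem_map, List.getElem_map]
    exact fun h => htne (f.injective h)

end Main2

theorem stmt13' {V : Type} (lam : Cardinal) (hlam : Cardinal.aleph0 ≤ lam)
    (hV : Cardinal.mk V = lam) (F : Set (SimpleGraph V))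
    (hForb : ∀ G : SimpleGraph V, ¬ SubCopy rayG G → G ∈ F)
    (hInd : ∀ H ∈ F, ∀ R : SimpleGraph ℕ, IsRado R → ¬ Nonempty (R ↪g H)) :
    ∀ H ∈ F, ∃ G' : SimpleGraph V, ¬ SubCopy rayG G' ∧ ¬ Nonempty (G' ↪g H) := by
  intro H hH
  by_contra hcon
  push_neg at hcon
  have hU : ∀ G' : SimpleGraph V, ¬ SubCopy rayG G' → Nonempty (G' ↪g H) := hcon
  classical
  let step : {s : List V // s ∈ UU radoG lam H} → {s : List V // s ∈ UU radoG lam H} :=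
    fun p => ⟨p.1 ++ [(UU_extend_mem hlam hV hU p.2).choose],
      (UU_extend_mem hlam hV hU p.2).choose_spec⟩
  let seq : ℕ → {s : List V // s ∈ UU radoG lam H} :=
    fun n => Nat.rec ⟨[], UU_nil hlam hV hU⟩ (fun _ p => step p) n
  have hlen : ∀ n, (seq n).1.length = n := by
    intro n
    induction n with
    | zero => rfl
    | succ n ih =>
      show ((seq n).1 ++ [_]).length = n + 1
      rw [List.length_append, ih]
      rfl
  have hpref : ∀ n m, n ≤ m → (seq n).1 <+: (seq m).1 := by
    intro n m h
    induction m with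
    | zero =>
      have : n = 0 := by omega
      subst this
      exact List.prefix_refl _
    | succ m ih =>
      rcases Nat.lt_or_ge n (m + 1) with h' | h'
      · refine (ih (by omega)).trans ?_
        exact List.prefix_append _ _
      · have : n = m + 1 := by omega
        subst this
        exact List.prefix_refl _
  let x : ℕ → V := fun n =>
    (seq (n + 1)).1[n]'(lt_of_lt_of_eq (Nat.lt_succ_self n) (hlen (n + 1)).symm)
  have hx : ∀ n m, (h : n < m) →
      ((seq m).1[n]'(lt_of_lt_of_eq h (hlen m).symm)) = x n := by
    intro n m h
    exact ((hpref (n + 1) m h).getElem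
      (lt_of_lt_of_eq (Nat.lt_succ_self n) (hlen (n + 1)).symm)).symm
  have key : ∀ a b : ℕ, a ≠ b → (H.Adj (x a) (x b) ↔ radoG.Adj a b) ∧ x a ≠ x b := by
    intro a b hab
    set M := max a b + 1 with hM
    have haM : a < M := lt_of_le_of_lt (le_max_left a b) (Nat.lt_succ_self _)
    have hbM : b < M := lt_of_le_of_lt (le_max_right a b) (Nat.lt_succ_self _)
    have h := UU_adj hlam hV hU (seq M).2 a b (lt_of_lt_of_eq haM (hlen M).symm)
      (lt_of_lt_of_eq hbM (hlen M).symm) hab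
    rwa [hx a M haM, hx b M hbM] at h
  refine hInd H hH radoG isRado_radoG ⟨⟨⟨x, ?_⟩, ?_⟩⟩
  · intro a b hab
    by_contra hne
    exact (key a b hne).2 hab
  · intro a b
    rcases eq_or_ne a b with rfl | hne
    · simp
    · exact (key a b hne).1


/-- no class `𝔉` with `Forb_λ(P_ω) ⊆ 𝔉 ⊆ Forb^ind_λ(R)` has a universal
element: for every `H ∈ 𝔉` some ray-free `G'` does not embed into `H`. -/
theorem stmt13 {V : Type} (lam : Cardinal) (hlam : Cardinal.aleph0 ≤ lam)
    (hV : Cardinal.mk V = lam) (F : Set (SimpleGraph V))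
    (hForb : ∀ G : SimpleGraph V, ¬ SubCopy rayG G → G ∈ F)
    (hInd : ∀ H ∈ F, ∀ R : SimpleGraph ℕ, IsRado R → ¬ Nonempty (R ↪g H)) :
    ∀ H ∈ F, ∃ G' : SimpleGraph V, ¬ SubCopy rayG G' ∧ ¬ Nonempty (G' ↪g H) := by
  exact stmt13' lam hlam hV F hForb hInd
end
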